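/- Classical symmetry criterion: the bilinear form g is symmetric on W (i.e. g(φ, φ′) = g(φ′, φ) for all φ, φ′ ∈ W) if and only if T(T(φ)) = (−1)^{N−1} · T(T(1)) · φ for all φ ∈ Λ¹W = W, where T(T(1)) ∈ Λ⁰W = ℂ is a scalar. -/

import Mathlib

noncomputable section

/-- The `N`-dimensional complex vector space `W` with basis `(ω¹, …, ω^N)`. -/
abbrev W (N : ℕ) : Type := Fin N → ℂ

/-- The distinguished basis `(ω¹, …, ω^N)` of `W`. -/
def e (N : ℕ) : Fin N → W N := fun i => Pi.basisFun ℂ (Fin N) i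

/-- The full exterior algebra `ΛW`. -/
abbrev E (N : ℕ) : Type := ExteriorAlgebra ℂ (W N)

/-- The `k`-th exterior power `ΛᵏW`, as a submodule of `ΛW`. -/
def degE (N k : ℕ) : Submodule ℂ (E N) :=
  (LinearMap.range (ExteriorAlgebra.ι ℂ : W N →ₗ[ℂ] E N)) ^ k

/-- The basis monomial `ω^{a 0} ∧ ⋯ ∧ ω^{a (k-1)} ∈ ΛᵏW`. -/
def mono (N : ℕ) {k : ℕ} (a : Fin k → Fin N) : E N :=
  (List.ofFn fun j => ExteriorAlgebra.ι ℂ (e N (a j))).prod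

/-- `HodgeData N g G st m T` packages the classical data: a nondegenerate bilinear form
`g` on `W`, its extensions `G k` to the exterior powers `ΛᵏW` (via the permutation-sum
formula), the antilinear involution `st` of `ΛW` fixing every basis monomial, the volume
form `μ = m ω¹∧⋯∧ω^N`, and the operator `T` defined by
`φ* ∧ T(φ′) = (1/k!) G k (φ*, φ′) μ`, sending `ΛᵏW` into `Λ^{N−k}W`. -/
structure HodgeData (N : ℕ) (g : W N →ₗ[ℂ] W N →ₗ[ℂ] ℂ)
    (G : ℕ → (E N →ₗ[ℂ] E N →ₗ[ℂ] ℂ)) (st : E N →ₛₗ[starRingEnd ℂ] E N)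
    (m : ℂ) (T : E N →ₗ[ℂ] E N) : Prop where
  nondeg : LinearMap.BilinForm.Nondegenerate g
  m_ne : m ≠ 0
  hG : ∀ (k : ℕ) (a b : Fin k → Fin N),
    G k (mono N a) (mono N b) =
      ∑ π : Equiv.Perm (Fin k), ∑ π' : Equiv.Perm (Fin k),
        (((Equiv.Perm.sign π : ℤ) * (Equiv.Perm.sign π' : ℤ) : ℤ) : ℂ) *
          ∏ j : Fin k, g (e N (a (π j))) (e N (b (π' j)))
  hst : ∀ (k : ℕ) (a : Fin k → Fin N), st (mono N a) = mono N a
  hTdeg : ∀ k : ℕ, ∀ φ ∈ degE N k, T φ ∈ degE N (N - k)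
  hTdef : ∀ k : ℕ, ∀ φ ∈ degE N k, ∀ φ' ∈ degE N k,
    st φ * T φ' =
      (((k.factorial : ℂ))⁻¹ * G k (st φ) φ') • (m • mono N (fun j : Fin N => j))

/-! ### Auxiliary lemmas -/

lemma mono_eq_iMulti (N : ℕ) {k : ℕ} (a : Fin k → Fin N) :
    mono N a = ExteriorAlgebra.ιMulti ℂ k (fun j => e N (a j)) :=
  (ExteriorAlgebra.ιMulti_apply _).symm

lemma mono_mem (N : ℕ) {k : ℕ} (a : Fin k → Fin N) : mono N a ∈ degE N k := by
  rw [mono_eq_iMulti]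
  exact ExteriorAlgebra.ιMulti_range ℂ k (Set.mem_range_self _)

lemma mono_zero (N : ℕ) (a : Fin 0 → Fin N) : mono N a = 1 := by
  simp [mono, List.ofFn_zero]

lemma mono_one' (N : ℕ) (a : Fin 1 → Fin N) :
    mono N a = ExteriorAlgebra.ι ℂ (e N (a 0)) := by
  simp [mono, List.ofFn_succ, List.ofFn_zero]

lemma mono_cons (N : ℕ) {k : ℕ} (a : Fin N) (as : Fin k → Fin N) :
    mono N (Fin.cons a as) = ExteriorAlgebra.ι ℂ (e N a) * mono N as := by
  simp only [mono, List.ofFn_succ, List.prod_cons, Fin.cons_zero, Fin.cons_succ]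

lemma mono_snoc (N : ℕ) {k : ℕ} (as : Fin k → Fin N) (a : Fin N) :
    mono N (Fin.snoc as a) = mono N as * ExteriorAlgebra.ι ℂ (e N a) := by
  simp only [mono, List.ofFn_succ', List.concat_eq_append, List.prod_append, List.prod_cons,
    List.prod_nil, Fin.snoc_castSucc, Fin.snoc_last, mul_one]

lemma mono_eq_zero (N : ℕ) {k : ℕ} (a : Fin k → Fin N) {i j : Fin k} (hij : i ≠ j)
    (h : a i = a j) : mono N a = 0 := by
  rw [mono_eq_iMulti]
  exact AlternatingMap.map_eq_zero_of_eq _ _ (by rw [h]) hij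

lemma mono_comp_perm (N : ℕ) {k : ℕ} (a : Fin k → Fin N) (σ : Equiv.Perm (Fin k)) :
    mono N (a ∘ σ) = ((Equiv.Perm.sign σ : ℤ) : ℂ) • mono N a := by
  rw [mono_eq_iMulti, mono_eq_iMulti]
  rw [show (fun j => e N ((a ∘ σ) j)) = ((fun j => e N (a j)) ∘ σ) from rfl]
  rw [AlternatingMap.map_perm, Units.smul_def, Int.cast_smul_eq_zsmul]

def detFam (N : ℕ) : ∀ i : ℕ, (W N) [⋀^Fin i]→ₗ[ℂ] ℂ := fun i =>
  if hi : i = N then hi ▸ Matrix.detRowAlternating else 0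

lemma detFam_self (N : ℕ) : detFam N N = Matrix.detRowAlternating := by
  simp [detFam]

lemma B_ne_zero (N : ℕ) : mono N (fun j : Fin N => j) ≠ 0 := by
  intro h
  have h0 := congrArg (fun x => ExteriorAlgebra.liftAlternating (detFam N) x) h
  simp only [mono_eq_iMulti, ExteriorAlgebra.liftAlternating_apply_ιMulti, map_zero] at h0
  rw [detFam_self] at h0
  have h3 : Matrix.detRowAlternating (R := ℂ) (n := Fin N) (fun j : Fin N => e N j) = 1 := by
    have h4 : (Matrix.of fun j : Fin N => e N j) = 1 := by
      funext i j
      simp [e, Matrix.one_apply, Pi.single_apply, eq_comm]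
    show Matrix.det (Matrix.of fun j : Fin N => e N j) = 1
    rw [h4, Matrix.det_one]
  rw [h3] at h0
  exact one_ne_zero h0

/-- `ê c`, the monomial omitting `ω^c`. -/
def eh (n : ℕ) (c : Fin (n+1)) : E (n+1) := mono (n+1) (fun j : Fin n => c.succAbove j)

lemma cons_succAbove_eq (n : ℕ) (c : Fin (n+1)) :
    Fin.cons c (fun j : Fin n => c.succAbove j) =
      (fun j : Fin (n+1) => j) ∘ (Fin.cycleRange c).symm := by
  funext j
  apply (Fin.cycleRange c).injective
  simp only [Function.comp_apply, Equiv.apply_symm_apply]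
  induction j using Fin.cases with
  | zero => simp [Fin.cycleRange_self]
  | succ i => simp [Fin.cycleRange_succAbove]

lemma iota_mul_eh (n : ℕ) (a c : Fin (n+1)) :
    ExteriorAlgebra.ι ℂ (e (n+1) a) * eh n c =
      if a = c then ((-1:ℂ))^(c:ℕ) • mono (n+1) (fun j : Fin (n+1) => j) else 0 := by
  rw [eh, ← mono_cons]
  split_ifs with h
  · subst h
    rw [cons_succAbove_eq, mono_comp_perm]
    congr 1
    rw [Equiv.Perm.sign_symm, Fin.sign_cycleRange]
    push_cast
    rfl
  · obtain ⟨j₀, hj₀⟩ := Fin.exists_succAbove_eq h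
    exact mono_eq_zero _ _ (Ne.symm (Fin.succ_ne_zero j₀))
      (by simp [Fin.cons_zero, Fin.cons_succ, hj₀])

lemma snoc_succAbove_eq (n : ℕ) (c : Fin (n+1)) :
    (Fin.snoc (fun j : Fin n => c.succAbove j) c : Fin (n+1) → Fin (n+1)) =
      Fin.cons c (fun j : Fin n => c.succAbove j) ∘ (finRotate (n+1)) := by
  funext j
  induction j using Fin.lastCases with
  | last => simp
  | cast i =>
      simp only [Fin.snoc_castSucc, Function.comp_apply, finRotate_succ_apply,
        Fin.coeSucc_eq_succ, Fin.cons_succ]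

lemma eh_mul_iota (n : ℕ) (c b : Fin (n+1)) :
    eh n c * ExteriorAlgebra.ι ℂ (e (n+1) b) =
      if b = c then ((-1:ℂ))^(n + (c:ℕ)) • mono (n+1) (fun j : Fin (n+1) => j) else 0 := by
  rw [eh, ← mono_snoc]
  split_ifs with h
  · subst h
    rw [snoc_succAbove_eq, mono_comp_perm, cons_succAbove_eq, mono_comp_perm, smul_smul]
    congr 1
    rw [Equiv.Perm.sign_symm, Fin.sign_cycleRange, sign_finRotate]
    push_cast
    rw [← pow_add]
  · obtain ⟨j₀, hj₀⟩ := Fin.exists_succAbove_eq h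
    refine mono_eq_zero _ _ (ne_of_lt (Fin.castSucc_lt_last j₀)) ?_
    simp [Fin.snoc_castSucc, Fin.snoc_last, hj₀]

lemma sum_perm_det {k : ℕ} (A : Matrix (Fin k) (Fin k) ℂ) :
    (∑ π : Equiv.Perm (Fin k), ∑ π' : Equiv.Perm (Fin k),
      (((Equiv.Perm.sign π : ℤ) * (Equiv.Perm.sign π' : ℤ) : ℤ) : ℂ) *
        ∏ j : Fin k, A (π j) (π' j)) = (k.factorial : ℂ) * A.det := by
  have key : ∀ π : Equiv.Perm (Fin k),
      (∑ π' : Equiv.Perm (Fin k),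
        (((Equiv.Perm.sign π : ℤ) * (Equiv.Perm.sign π' : ℤ) : ℤ) : ℂ) *
          ∏ j : Fin k, A (π j) (π' j)) = A.det := by
    intro π
    rw [← Equiv.sum_comp (Equiv.mulRight π)
      (fun π' => (((Equiv.Perm.sign π : ℤ) * (Equiv.Perm.sign π' : ℤ) : ℤ) : ℂ) *
        ∏ j : Fin k, A (π j) (π' j))]
    rw [← Matrix.det_transpose A, Matrix.det_apply']
    refine Finset.sum_congr rfl fun σ _ => ?_
    have h1 : (Equiv.mulRight π) σ = σ * π := rfl
    have h2 : Equiv.Perm.sign π * Equiv.Perm.sign (σ * π) = Equiv.Perm.sign σ := by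
      rw [map_mul, ← mul_assoc, mul_comm (Equiv.Perm.sign π) (Equiv.Perm.sign σ), mul_assoc,
        Int.units_mul_self, mul_one]
    rw [h1]
    congr 1
    · rw [← h2]; push_cast; ring
    · rw [← Equiv.prod_comp π (fun i => A.transpose (σ i) i)]
      refine Finset.prod_congr rfl fun j _ => ?_
      simp [Matrix.transpose_apply, Equiv.Perm.mul_apply]
  rw [Finset.sum_congr rfl fun π _ => key π, Finset.sum_const, Finset.card_univ,
    Fintype.card_perm, Fintype.card_fin, nsmul_eq_mul]

lemma basis_expand (N : ℕ) (v : W N) : v = ∑ i, v i • e N i := by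
  funext x
  simp [e, Pi.single_apply]

lemma degE_le_span_mono (N k : ℕ) :
    degE N k ≤ Submodule.span ℂ (Set.range (fun a : Fin k → Fin N => mono N a)) := by
  have h1 : degE N k = Submodule.span ℂ (Set.range (ExteriorAlgebra.ιMulti ℂ k (M := W N))) :=
    (ExteriorAlgebra.ιMulti_span_fixedDegree ℂ k).symm
  rw [h1, Submodule.span_le]
  rintro x ⟨v, rfl⟩
  have h2 : ExteriorAlgebra.ιMulti ℂ k v =
      ∑ r : Fin k → Fin N, (∏ j, v j (r j)) • mono N r := by
    calc ExteriorAlgebra.ιMulti ℂ k v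
        = ExteriorAlgebra.ιMulti ℂ k (fun j => ∑ i, v j i • e N i) := by
          conv_lhs => rw [show v = (fun j => ∑ i, v j i • e N i) from
            funext fun j => basis_expand N (v j)]
      _ = ∑ r : Fin k → Fin N, ExteriorAlgebra.ιMulti ℂ k (fun j => v j (r j) • e N (r j)) :=
          (ExteriorAlgebra.ιMulti ℂ k).toMultilinearMap.map_sum (fun j i => v j i • e N i)
      _ = ∑ r : Fin k → Fin N, (∏ j, v j (r j)) • mono N r := by
          refine Finset.sum_congr rfl fun r _ => ?_
          rw [mono_eq_iMulti]
          exact (ExteriorAlgebra.ιMulti ℂ k).toMultilinearMap.map_smul_univ _ _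
  rw [h2]
  exact Submodule.sum_mem _ fun r _ =>
    Submodule.smul_mem _ _ (Submodule.subset_span (Set.mem_range_self r))

lemma mono_mem_span_eh (n : ℕ) (a : Fin n → Fin (n+1)) :
    mono (n+1) a ∈ Submodule.span ℂ (Set.range (eh n)) := by
  by_cases inj : Function.Injective a
  · have hcard : (Finset.univ.image a).card = n := by
      rw [Finset.card_image_of_injective _ inj, Finset.card_univ, Fintype.card_fin]
    have hne : Finset.univ.image a ≠ Finset.univ := by
      intro h
      rw [h, Finset.card_univ, Fintype.card_fin] at hcard
      omega
    have hex : ∃ c, c ∉ Finset.univ.image a := by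
      by_contra hcon
      push_neg at hcon
      exact hne (Finset.eq_univ_iff_forall.mpr hcon)
    obtain ⟨c, hc⟩ := hex
    have hane : ∀ j, a j ≠ c := fun j h =>
      hc (Finset.mem_image.mpr ⟨j, Finset.mem_univ j, h⟩)
    set f : Fin n → Fin n := fun j => (Fin.exists_succAbove_eq (hane j)).choose with hf
    have hspec : ∀ j, c.succAbove (f j) = a j :=
      fun j => (Fin.exists_succAbove_eq (hane j)).choose_spec
    have finj : Function.Injective f := by
      intro i j h
      apply inj
      rw [← hspec i, ← hspec j, h]
    have fbij : Function.Bijective f := (Finite.injective_iff_bijective).mp finj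
    set σ : Equiv.Perm (Fin n) := Equiv.ofBijective f fbij with hσ
    have ha : a = (fun j : Fin n => c.succAbove j) ∘ σ := by
      funext j
      simp only [Function.comp_apply, hσ, Equiv.ofBijective_apply]
      exact (hspec j).symm
    rw [ha, mono_comp_perm]
    exact Submodule.smul_mem _ _ (Submodule.subset_span ⟨c, rfl⟩)
  · rw [Function.not_injective_iff] at inj
    obtain ⟨i, j, heq, hne⟩ := inj
    rw [mono_eq_zero (n+1) a hne heq]
    exact Submodule.zero_mem _

lemma iota_mem_degE_one (N : ℕ) (w : W N) :
    ExteriorAlgebra.ι ℂ w ∈ degE N 1 := by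
  rw [degE, pow_one]
  exact ⟨w, rfl⟩

lemma degE_one_mem {N : ℕ} {x : E N} (hx : x ∈ degE N 1) :
    ∃ w, ExteriorAlgebra.ι ℂ w = x := by
  rw [degE, pow_one] at hx
  exact hx

lemma iota_eq_sum (N : ℕ) (w : W N) :
    ExteriorAlgebra.ι ℂ w = ∑ b, w b • ExteriorAlgebra.ι ℂ (e N b) := by
  conv_lhs => rw [basis_expand N w]
  rw [map_sum]
  simp only [map_smul]

lemma scalar_eq_of_smul {N : ℕ} {x : E N} (hx : x ≠ 0) {c1 c2 : ℂ} (h : c1 • x = c2 • x) :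
    c1 = c2 :=
  smul_left_injective ℂ hx h

lemma eh_mul_iota_vec (n : ℕ) (c : Fin (n+1)) (w : W (n+1)) :
    eh n c * ExteriorAlgebra.ι ℂ w =
      (w c * ((-1:ℂ))^(n + (c:ℕ))) • mono (n+1) (fun j : Fin (n+1) => j) := by
  rw [iota_eq_sum, Finset.mul_sum]
  have h1 : ∀ b : Fin (n+1), eh n c * w b • ExteriorAlgebra.ι ℂ (e (n+1) b) =
      (if b = c then (w b * ((-1:ℂ))^(n + (c:ℕ))) • mono (n+1) (fun j : Fin (n+1) => j)
        else 0) := by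
    intro b
    rw [mul_smul_comm, eh_mul_iota]
    split_ifs with h
    · rw [smul_smul]
    · rw [smul_zero]
  rw [Finset.sum_congr rfl fun b _ => h1 b, Finset.sum_ite_eq' Finset.univ c]
  simp

lemma lambda1_zero {n : ℕ} {x : E (n+1)} (hx : x ∈ degE (n+1) 1)
    (h : ∀ c, eh n c * x = 0) : x = 0 := by
  obtain ⟨w, rfl⟩ := degE_one_mem hx
  have hw : w = 0 := by
    funext c
    have := h c
    rw [eh_mul_iota_vec] at this
    have h2 : w c * ((-1:ℂ))^(n + (c:ℕ)) = 0 :=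
      scalar_eq_of_smul (B_ne_zero (n+1)) (by rw [this, zero_smul])
    rcases mul_eq_zero.mp h2 with h3 | h3
    · exact h3
    · exact absurd h3 (pow_ne_zero _ (neg_ne_zero.mpr one_ne_zero))
  rw [hw, map_zero]

lemma lambdan_zero {n : ℕ} {x : E (n+1)} (hx : x ∈ degE (n+1) n)
    (h : ∀ a, ExteriorAlgebra.ι ℂ (e (n+1) a) * x = 0) : x = 0 := by
  have hx2 : x ∈ Submodule.span ℂ (Set.range (eh n)) := by
    have h1 := degE_le_span_mono (n+1) n hx
    have h2 : Submodule.span ℂ (Set.range (fun a : Fin n → Fin (n+1) => mono (n+1) a)) ≤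
        Submodule.span ℂ (Set.range (eh n)) := by
      rw [Submodule.span_le]
      rintro y ⟨a, rfl⟩
      exact mono_mem_span_eh n a
    exact h2 h1
  obtain ⟨lam, rfl⟩ := (Submodule.mem_span_range_iff_exists_fun ℂ).mp hx2
  have hlam : ∀ a, lam a = 0 := by
    intro a
    have := h a
    rw [Finset.mul_sum] at this
    have h1 : ∀ c : Fin (n+1),
        ExteriorAlgebra.ι ℂ (e (n+1) a) * lam c • eh n c =
        (if a = c then (lam c * ((-1:ℂ))^((c:ℕ))) • mono (n+1) (fun j : Fin (n+1) => j)
          else 0) := by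
      intro c
      rw [mul_smul_comm, iota_mul_eh]
      split_ifs with h
      · rw [smul_smul]
      · rw [smul_zero]
    rw [Finset.sum_congr rfl fun c _ => h1 c, Finset.sum_ite_eq Finset.univ a] at this
    simp only [Finset.mem_univ, if_true] at this
    have h2 : lam a * ((-1:ℂ))^((a:ℕ)) = 0 :=
      scalar_eq_of_smul (B_ne_zero (n+1)) (by rw [this, zero_smul])
    rcases mul_eq_zero.mp h2 with h3 | h3
    · exact h3
    · exact absurd h3 (pow_ne_zero _ (neg_ne_zero.mpr one_ne_zero))
  simp [hlam]


set_option maxHeartbeats 1000000 in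
/-- classical symmetry criterion: `g` is symmetric on `W` iff
`T(T(φ)) = (−1)^{N−1} T(T(1)) φ` for all `φ ∈ Λ¹W` (where `T(T(1)) ∈ Λ⁰W = ℂ`). -/
theorem classical_symmetry_criterion (N : ℕ) (hN : 1 ≤ N)
    (g : W N →ₗ[ℂ] W N →ₗ[ℂ] ℂ) (G : ℕ → (E N →ₗ[ℂ] E N →ₗ[ℂ] ℂ))
    (st : E N →ₛₗ[starRingEnd ℂ] E N) (m : ℂ) (T : E N →ₗ[ℂ] E N)
    (H : HodgeData N g G st m T) :
    (∀ v w : W N, g v w = g w v) ↔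
      (∀ φ ∈ degE N 1, T (T φ) = ((-1 : ℂ)) ^ (N - 1) • (T (T 1) * φ)) := by
  obtain ⟨n, rfl⟩ : ∃ n, N = n + 1 := ⟨N - 1, by omega⟩
  obtain ⟨nondeg, m_ne, hG, hst, hTdeg, hTdef⟩ := H
  have hsub1 : n + 1 - 1 = n := by omega
  set Gm : Matrix (Fin (n+1)) (Fin (n+1)) ℂ :=
    Matrix.of fun i j => g (e (n+1) i) (e (n+1) j) with hGm
  set d : ℂ := Gm.det with hd
  set Mdet : Fin (n+1) → Fin (n+1) → ℂ :=
    fun a c => (Gm.submatrix a.succAbove c.succAbove).det with hMdet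
  have Gdet : ∀ (k : ℕ) (a b : Fin k → Fin (n+1)),
      G k (mono (n+1) a) (mono (n+1) b)
        = (k.factorial : ℂ) *
            Matrix.det (Matrix.of fun i j => g (e (n+1) (a i)) (e (n+1) (b j))) := by
    intro k a b
    rw [hG k a b]
    exact sum_perm_det (Matrix.of fun i j => g (e (n+1) (a i)) (e (n+1) (b j)))
  have key : ∀ (k : ℕ) (a : Fin k → Fin (n+1)), ∀ φ' ∈ degE (n+1) k,
      mono (n+1) a * T φ' =
        (((k.factorial : ℂ))⁻¹ * G k (mono (n+1) a) φ') •
          (m • mono (n+1) (fun j : Fin (n+1) => j)) := by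
    intro k a φ' h
    have h2 := hTdef k (mono (n+1) a) (mono_mem _ a) φ' h
    rwa [hst k a] at h2
  have h1mem : (1 : E (n+1)) ∈ degE (n+1) 0 := by
    rw [← mono_zero (n+1) (fun j : Fin 0 => j.elim0)]
    exact mono_mem _ _
  have hg_eval : ∀ (x y : W (n+1)), g x y = ∑ b, y b * g x (e (n+1) b) := by
    intro x y
    conv_lhs => rw [basis_expand (n+1) y]
    rw [map_sum]
    simp [smul_eq_mul]
  have hG1 : ∀ (a : Fin (n+1)) (w : W (n+1)),
      G 1 (mono (n+1) (fun _ : Fin 1 => a)) (ExteriorAlgebra.ι ℂ w) = g (e (n+1) a) w := by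
    intro a w
    rw [iota_eq_sum, map_sum]
    have hterm : ∀ b : Fin (n+1),
        G 1 (mono (n+1) (fun _ : Fin 1 => a)) (w b • ExteriorAlgebra.ι ℂ (e (n+1) b)) =
          w b * g (e (n+1) a) (e (n+1) b) := by
      intro b
      have hmb : mono (n+1) (fun _ : Fin 1 => b) = ExteriorAlgebra.ι ℂ (e (n+1) b) :=
        mono_one' _ _
      rw [map_smul, smul_eq_mul, ← hmb, Gdet 1]
      norm_num [Matrix.det_fin_one]
    rw [Finset.sum_congr rfl fun b _ => hterm b, ← hg_eval (e (n+1) a) w]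
  have hF1 : ∀ (a : Fin (n+1)) (w : W (n+1)),
      ExteriorAlgebra.ι ℂ (e (n+1) a) * T (ExteriorAlgebra.ι ℂ w)
        = (g (e (n+1) a) w * m) • mono (n+1) (fun j : Fin (n+1) => j) := by
    intro a w
    have hmb : mono (n+1) (fun _ : Fin 1 => a) = ExteriorAlgebra.ι ℂ (e (n+1) a) :=
      mono_one' _ _
    have h2 := key 1 (fun _ : Fin 1 => a) (ExteriorAlgebra.ι ℂ w) (iota_mem_degE_one _ w)
    rw [hG1, hmb] at h2
    rw [h2, smul_smul]
    norm_num
  have hF4 : ∀ a c, eh n a * T (eh n c) =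
      (m * Mdet a c) • mono (n+1) (fun j : Fin (n+1) => j) := by
    intro a c
    have h2 := key n (fun j : Fin n => a.succAbove j) (eh n c) (mono_mem _ _)
    replace h2 : eh n a * T (eh n c) =
        (((n.factorial : ℂ))⁻¹ * ((n.factorial : ℂ) * Mdet a c)) •
          (m • mono (n+1) (fun j : Fin (n+1) => j)) := by
      rw [show eh n c = mono (n+1) (fun j : Fin n => c.succAbove j) from rfl, Gdet n] at h2
      exact h2
    rw [h2, smul_smul]
    have hfac : ((n.factorial : ℂ)) ≠ 0 := Nat.cast_ne_zero.mpr n.factorial_ne_zero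
    congr 1
    rw [inv_mul_cancel_left₀ hfac, mul_comm]
  have hF5 : ∀ c, T (eh n c) =
      ExteriorAlgebra.ι ℂ (fun b : Fin (n+1) => ((-1:ℂ))^(n+(b:ℕ)) * m * Mdet b c) := by
    intro c
    have hmem : T (eh n c) ∈ degE (n+1) 1 := by
      have h2 := hTdeg n (eh n c) (mono_mem _ _)
      rwa [show n + 1 - n = 1 by omega] at h2
    obtain ⟨w, hw⟩ := degE_one_mem hmem
    rw [← hw]
    congr 1
    funext b
    have h2 : eh n b * ExteriorAlgebra.ι ℂ w =
        (m * Mdet b c) • mono (n+1) (fun j : Fin (n+1) => j) := by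
      rw [hw]; exact hF4 b c
    rw [eh_mul_iota_vec] at h2
    have h3 : w b * ((-1:ℂ))^(n+(b:ℕ)) = m * Mdet b c :=
      scalar_eq_of_smul (B_ne_zero _) h2
    have hsq : ((-1:ℂ))^(n+(b:ℕ)) * ((-1:ℂ))^(n+(b:ℕ)) = 1 := by
      rw [← pow_add]
      exact Even.neg_one_pow ⟨n+(b:ℕ), by ring⟩
    calc w b = (w b * ((-1:ℂ))^(n+(b:ℕ))) * ((-1:ℂ))^(n+(b:ℕ)) := by
          rw [mul_assoc, hsq, mul_one]
      _ = ((-1:ℂ))^(n+(b:ℕ)) * m * Mdet b c := by rw [h3]; ring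
  have hF2 : ∀ w : W (n+1), T (ExteriorAlgebra.ι ℂ w)
      = m • ∑ c : Fin (n+1), (((-1:ℂ))^((c:ℕ)) * g (e (n+1) c) w) • eh n c := by
    intro w
    have hmemT : T (ExteriorAlgebra.ι ℂ w) ∈ degE (n+1) n := by
      have h2 := hTdeg 1 (ExteriorAlgebra.ι ℂ w) (iota_mem_degE_one _ w)
      rwa [hsub1] at h2
    have hmemS : (m • ∑ c : Fin (n+1), (((-1:ℂ))^((c:ℕ)) * g (e (n+1) c) w) • eh n c) ∈ degE (n+1) n :=
      Submodule.smul_mem _ _ (Submodule.sum_mem _ fun c _ =>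
        Submodule.smul_mem _ _ (mono_mem _ _))
    have hzero : T (ExteriorAlgebra.ι ℂ w)
        - (m • ∑ c : Fin (n+1), (((-1:ℂ))^((c:ℕ)) * g (e (n+1) c) w) • eh n c) = 0 := by
      refine lambdan_zero (Submodule.sub_mem _ hmemT hmemS) fun a => ?_
      rw [mul_sub, hF1]
      have h4 : ExteriorAlgebra.ι ℂ (e (n+1) a) *
          (m • ∑ c : Fin (n+1), (((-1:ℂ))^((c:ℕ)) * g (e (n+1) c) w) • eh n c)
          = (g (e (n+1) a) w * m) • mono (n+1) (fun j : Fin (n+1) => j) := by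
        rw [mul_smul_comm, Finset.mul_sum]
        have hterm : ∀ c : Fin (n+1),
            ExteriorAlgebra.ι ℂ (e (n+1) a) * ((((-1:ℂ))^((c:ℕ)) * g (e (n+1) c) w) • eh n c)
            = (if a = c then ((((-1:ℂ))^((c:ℕ)) * ((-1:ℂ))^((c:ℕ))) * g (e (n+1) c) w) •
                mono (n+1) (fun j : Fin (n+1) => j) else 0) := by
          intro c
          rw [mul_smul_comm, iota_mul_eh]
          split_ifs with h
          · rw [smul_smul]; congr 1; ring
          · rw [smul_zero]
        rw [Finset.sum_congr rfl fun c _ => hterm c, Finset.sum_ite_eq Finset.univ a]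
        have hsq : ((-1:ℂ))^((a:ℕ)) * ((-1:ℂ))^((a:ℕ)) = 1 := by
          rw [← pow_add]
          exact Even.neg_one_pow ⟨(a:ℕ), by ring⟩
        simp only [Finset.mem_univ, if_true, hsq, one_mul, smul_smul]
        congr 1
        ring
      rw [h4, sub_self]
    exact sub_eq_zero.mp hzero
  have hT1 : T 1 = m • mono (n+1) (fun j : Fin (n+1) => j) := by
    have h2 := key 0 (fun j : Fin 0 => j.elim0) 1 h1mem
    rw [mono_zero, one_mul] at h2
    rw [h2]
    have h3 : G 0 (1 : E (n+1)) 1 = 1 := by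
      rw [← mono_zero (n+1) (fun j : Fin 0 => j.elim0), Gdet 0]
      norm_num [Matrix.det_fin_zero]
    rw [h3]
    norm_num
  have hBmem : mono (n+1) (fun j : Fin (n+1) => j) ∈ degE (n+1) (n+1) := mono_mem _ _
  have hTB : T (mono (n+1) (fun j : Fin (n+1) => j)) = (m * d) • 1 := by
    have h2 := key (n+1) (fun j : Fin (n+1) => j) (mono (n+1) (fun j : Fin (n+1) => j)) hBmem
    replace h2 : mono (n+1) (fun j : Fin (n+1) => j) * T (mono (n+1) (fun j : Fin (n+1) => j)) =
        ((((n+1).factorial : ℂ))⁻¹ * (((n+1).factorial : ℂ) * d)) •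
          (m • mono (n+1) (fun j : Fin (n+1) => j)) := by
      rw [Gdet (n+1)] at h2
      exact h2
    have hTBmem : T (mono (n+1) (fun j : Fin (n+1) => j)) ∈ degE (n+1) 0 := by
      have h3 := hTdeg (n+1) _ hBmem
      rwa [show n + 1 - (n+1) = 0 by omega] at h3
    rw [degE, pow_zero] at hTBmem
    obtain ⟨c0, hc0⟩ := Submodule.mem_one.mp hTBmem
    have h4 : mono (n+1) (fun j : Fin (n+1) => j) * T (mono (n+1) (fun j : Fin (n+1) => j))
        = c0 • mono (n+1) (fun j : Fin (n+1) => j) := by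
      rw [← hc0, ← Algebra.commutes c0, ← Algebra.smul_def]
    have hfac : (((n+1).factorial : ℂ)) ≠ 0 := Nat.cast_ne_zero.mpr (n+1).factorial_ne_zero
    have h5 : c0 = m * d := by
      apply scalar_eq_of_smul (B_ne_zero (n+1))
      rw [← h4, h2, smul_smul]
      congr 1
      rw [inv_mul_cancel_left₀ hfac, mul_comm]
    rw [← hc0, h5, Algebra.algebraMap_eq_smul_one]
  have hTT1 : T (T 1) = (m * (m * d)) • 1 := by
    rw [hT1, map_smul, hTB, smul_smul]
  have hdetrow : ∀ (a : Fin (n+1)) (u : Fin (n+1) → ℂ),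
      (Gm.updateRow a u).det = ∑ c : Fin (n+1), (-1:ℂ)^((a:ℕ)+(c:ℕ)) * u c * Mdet a c := by
    intro a u
    rw [Matrix.det_succ_row (Gm.updateRow a u) a]
    refine Finset.sum_congr rfl fun c _ => ?_
    rw [Matrix.updateRow_self]
    have hsub : (Gm.updateRow a u).submatrix a.succAbove c.succAbove
        = Gm.submatrix a.succAbove c.succAbove := by
      ext i j
      rw [Matrix.submatrix_apply, Matrix.submatrix_apply,
        Matrix.updateRow_ne (Fin.succAbove_ne a i)]
    rw [hsub]
  have hTTw : ∀ w : W (n+1), T (T (ExteriorAlgebra.ι ℂ w)) =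
      ExteriorAlgebra.ι ℂ (fun a : Fin (n+1) => (m*m) * (-1:ℂ)^(n+(a:ℕ)) *
        ∑ c : Fin (n+1), (-1:ℂ)^((c:ℕ)) * g (e (n+1) c) w * Mdet a c) := by
    intro w
    rw [hF2 w, map_smul, map_sum]
    have hterm : ∀ c : Fin (n+1),
        T ((((-1:ℂ))^((c:ℕ)) * g (e (n+1) c) w) • eh n c)
        = ExteriorAlgebra.ι ℂ ((((-1:ℂ))^((c:ℕ)) * g (e (n+1) c) w) •
            fun b : Fin (n+1) => ((-1:ℂ))^(n+(b:ℕ)) * m * Mdet b c) := by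
      intro c
      rw [map_smul, hF5 c, ← map_smul]
    rw [Finset.sum_congr rfl fun c _ => hterm c, ← map_sum, ← map_smul]
    congr 1
    funext a
    simp only [Finset.sum_apply, Pi.smul_apply, smul_eq_mul]
    rw [Finset.mul_sum, Finset.mul_sum]
    refine Finset.sum_congr rfl fun c _ => ?_
    ring
  have hRHS : ∀ w : W (n+1), ((-1:ℂ))^(n+1-1) • (T (T 1) * ExteriorAlgebra.ι ℂ w)
      = ExteriorAlgebra.ι ℂ (fun a : Fin (n+1) => (-1:ℂ)^n * (m * (m * d)) * w a) := by
    intro w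
    rw [hTT1, hsub1, smul_mul_assoc, one_mul, smul_smul, ← map_smul]
    congr 1
  have hfacm : (m * m) * (-1:ℂ)^n ≠ 0 :=
    mul_ne_zero (mul_ne_zero m_ne m_ne) (pow_ne_zero _ (neg_ne_zero.mpr one_ne_zero))
  constructor
  · -- forward direction
    intro hsym φ hφ
    obtain ⟨w, rfl⟩ := degE_one_mem hφ
    rw [hTTw w, hRHS w]
    congr 1
    funext a
    have hcol : (fun c => g (e (n+1) c) w) = ∑ b, w b • Gm b := by
      funext c
      rw [hg_eval (e (n+1) c) w]
      simp only [Finset.sum_apply, Pi.smul_apply, smul_eq_mul]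
      refine Finset.sum_congr rfl fun b _ => ?_
      rw [hsym (e (n+1) c) (e (n+1) b)]
      rfl
    have h2 : (Gm.updateRow a (fun c => g (e (n+1) c) w)).det = w a * d := by
      rw [hcol, Matrix.det_updateRow_sum, smul_eq_mul]
    have h1 := hdetrow a (fun c => g (e (n+1) c) w)
    rw [h2] at h1
    have hsqa : ((-1:ℂ))^((a:ℕ)) * ((-1:ℂ))^((a:ℕ)) = 1 := by
      rw [← pow_add]
      exact Even.neg_one_pow ⟨(a:ℕ), by ring⟩
    have h3 : ∑ c : Fin (n+1), (-1:ℂ)^((c:ℕ)) * g (e (n+1) c) w * Mdet a c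
        = (-1:ℂ)^((a:ℕ)) * (w a * d) := by
      rw [h1, Finset.mul_sum]
      refine Finset.sum_congr rfl fun c _ => ?_
      rw [pow_add]
      linear_combination (-((-1:ℂ)^((c:ℕ)) * g (e (n+1) c) w * Mdet a c)) * hsqa
    rw [h3, pow_add]
    linear_combination ((m*m) * (-1:ℂ)^n * w a * d) * hsqa
  · -- backward direction
    intro hcrit
    have d_ne : d ≠ 0 := by
      intro hd0
      have hdet0 : Gm.transpose.det = 0 := by rw [Matrix.det_transpose, ← hd, hd0]
      obtain ⟨v, hv_ne, hv0⟩ := (Matrix.exists_mulVec_eq_zero_iff).mpr hdet0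
      apply hv_ne
      apply nondeg.1 v
      intro y
      have h2 : ∀ j, g v (e (n+1) j) = 0 := by
        intro j
        have h3 : g v (e (n+1) j) = ∑ i, v i * g (e (n+1) i) (e (n+1) j) := by
          conv_lhs => rw [basis_expand (n+1) v]
          rw [map_sum]
          simp [smul_eq_mul]
        rw [h3]
        have h4 := congrFun hv0 j
        simpa [Matrix.mulVec, dotProduct, Matrix.transpose_apply, mul_comm, hGm] using h4
      rw [hg_eval v y]
      simp [h2]
    have hentry : ∀ b c, g (e (n+1) c) (e (n+1) b) = g (e (n+1) b) (e (n+1) c) := by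
      intro b c
      have h2 := hcrit (ExteriorAlgebra.ι ℂ (e (n+1) b)) (iota_mem_degE_one _ _)
      rw [hTTw (e (n+1) b), hRHS (e (n+1) b)] at h2
      have h3 := (ExteriorAlgebra.ι_inj ℂ _ _).mp h2
      have h5 : ∀ a, (Gm.updateRow a (fun c' => g (e (n+1) c') (e (n+1) b))).det
          = (e (n+1) b a) * d := by
        intro a
        have h4 : (m*m) * (-1:ℂ)^(n+(a:ℕ)) * ∑ c' : Fin (n+1), (-1:ℂ)^((c':ℕ)) *
            g (e (n+1) c') (e (n+1) b) * Mdet a c'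
            = (-1:ℂ)^n * (m * (m * d)) * (e (n+1) b a) := congrFun h3 a
        apply mul_left_cancel₀ hfacm
        rw [hdetrow a]
        calc ((m*m) * (-1:ℂ)^n) * ∑ c' : Fin (n+1), (-1:ℂ)^((a:ℕ)+(c':ℕ)) *
              g (e (n+1) c') (e (n+1) b) * Mdet a c'
            = (m*m) * (-1:ℂ)^(n+(a:ℕ)) * ∑ c' : Fin (n+1), (-1:ℂ)^((c':ℕ)) *
              g (e (n+1) c') (e (n+1) b) * Mdet a c' := by
              rw [Finset.mul_sum, Finset.mul_sum]
              refine Finset.sum_congr rfl fun c' _ => ?_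
              rw [pow_add, pow_add]
              ring
          _ = (-1:ℂ)^n * (m * (m * d)) * (e (n+1) b a) := h4
          _ = ((m*m) * (-1:ℂ)^n) * ((e (n+1) b a) * d) := by ring
      set kk : Fin (n+1) → ℂ :=
        (Gm.transpose)⁻¹.mulVec (fun c' => g (e (n+1) c') (e (n+1) b)) with hkk
      have hGmT_det : Gm.transpose.det ≠ 0 := by
        rw [Matrix.det_transpose, ← hd]; exact d_ne
      have hcolb : (fun c' => g (e (n+1) c') (e (n+1) b)) = ∑ i, kk i • Gm i := by
        have h6 : Gm.transpose.mulVec kk = (fun c' => g (e (n+1) c') (e (n+1) b)) := by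
          rw [hkk, Matrix.mulVec_mulVec, Matrix.mul_nonsing_inv _ (isUnit_iff_ne_zero.mpr hGmT_det), Matrix.one_mulVec]
        rw [← h6]
        funext c'
        simp only [Matrix.mulVec, dotProduct, Finset.sum_apply, Pi.smul_apply,
          smul_eq_mul, Matrix.transpose_apply]
        exact Finset.sum_congr rfl fun i _ => mul_comm _ _
      have h7 : ∀ a, kk a = e (n+1) b a := by
        intro a
        have h8 := h5 a
        rw [hcolb, Matrix.det_updateRow_sum, smul_eq_mul] at h8
        exact mul_right_cancel₀ d_ne h8
      have h9 : g (e (n+1) c) (e (n+1) b) = ∑ i, e (n+1) b i * Gm i c := by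
        have h11 := congrFun hcolb c
        rw [h11]
        simp only [Finset.sum_apply, Pi.smul_apply, smul_eq_mul]
        exact Finset.sum_congr rfl fun i _ => by rw [h7 i]
      have h10 : ∑ i, e (n+1) b i * Gm i c = Gm b c := by
        have hterm : ∀ i, e (n+1) b i * Gm i c = if i = b then Gm i c else 0 := by
          intro i
          simp [e, Pi.single_apply]
        rw [Finset.sum_congr rfl fun i _ => hterm i, Finset.sum_ite_eq' Finset.univ b]
        simp
      rw [h9, h10]
      rfl
    intro v w'
    have hvw : ∀ v₁ w₁ : W (n+1), g v₁ w₁ = ∑ i, ∑ j, v₁ i * w₁ j *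
        g (e (n+1) i) (e (n+1) j) := by
      intro v₁ w₁
      conv_lhs => rw [basis_expand (n+1) v₁]
      rw [map_sum]
      simp only [LinearMap.coe_sum, Finset.sum_apply, map_smul, LinearMap.smul_apply,
        smul_eq_mul]
      refine Finset.sum_congr rfl fun i _ => ?_
      rw [hg_eval (e (n+1) i) w₁, Finset.mul_sum]
      refine Finset.sum_congr rfl fun j _ => ?_
      ring
    rw [hvw v w', hvw w' v, Finset.sum_comm]
    refine Finset.sum_congr rfl fun x _ => Finset.sum_congr rfl fun y _ => ?_
    rw [hentry x y]
    ring

end
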